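/- With the setting of the leakage lemma, suppose additionally b > a (the restriction H_S has a unique ground state ξ) and let ξ' be a ground state of H. Then |⟨ξ|ξ'⟩|² ≥ 1 - K²/((b - a)(J - 2K)). -/

import Mathlib

open ComplexConjugate

lemma aux_ortho {n : ℕ} (T : EuclideanSpace ℂ (Fin n) →L[ℂ] EuclideanSpace ℂ (Fin n))
    (hT : IsSelfAdjoint T) (S : Submodule ℂ (EuclideanSpace ℂ (Fin n)))
    (a : ℝ) (ξ : EuclideanSpace ℂ (Fin n)) (hξS : ξ ∈ S) (hξ : ‖ξ‖ = 1)
    (hmin : ∀ y ∈ S, a * ‖y‖ ^ 2 ≤ (inner ℂ y (T y) : ℂ).re)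
    (hξa : (inner ℂ ξ (T ξ) : ℂ).re = a)
    (x : EuclideanSpace ℂ (Fin n)) (hx : x ∈ S) (hxo : (inner ℂ ξ x : ℂ) = 0) :
    (inner ℂ ξ (T x) : ℂ) = 0 := by
  set γ : ℂ := inner ℂ ξ (T x) with hγ
  set C : ℝ := (inner ℂ x (T x) : ℂ).re - a * ‖x‖ ^ 2 with hC
  have key : ∀ z : ℂ, 0 ≤ 2 * (z * γ).re + ‖z‖ ^ 2 * C := by
    intro z
    have hymem : ξ + z • x ∈ S := S.add_mem hξS (S.smul_mem z hx)
    have hy := hmin _ hymem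
    have hnorm : ‖ξ + z • x‖ ^ 2 = 1 + ‖z‖ ^ 2 * ‖x‖ ^ 2 := by
      have h := norm_add_sq (𝕜 := ℂ) ξ (z • x)
      rw [h, hξ]
      simp [inner_smul_right, hxo, norm_smul, mul_pow]
    have hTx : (inner ℂ x (T ξ) : ℂ) = conj γ := by
      rw [hγ, ← inner_conj_symm]
      exact congrArg (starRingEnd ℂ) (hT.isSymmetric ξ x)
    have hzz : (starRingEnd ℂ) z * z = ((‖z‖ ^ 2 : ℝ) : ℂ) := by
      rw [mul_comm, Complex.mul_conj' z]; push_cast; ring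
    have hinner : (inner ℂ (ξ + z • x) (T (ξ + z • x)) : ℂ)
        = inner ℂ ξ (T ξ) + z * γ + conj (z * γ) + ((‖z‖ ^ 2 : ℝ) : ℂ) * inner ℂ x (T x) := by
      rw [map_add, map_smul]
      rw [inner_add_left, inner_add_right, inner_add_right, inner_smul_right,
        inner_smul_left, inner_smul_left, inner_smul_right, hTx, ← hγ, map_mul]
      linear_combination hzz * (inner ℂ x (T x) : ℂ)
    have hre : (inner ℂ (ξ + z • x) (T (ξ + z • x)) : ℂ).re
        = a + 2 * (z * γ).re + ‖z‖ ^ 2 * (inner ℂ x (T x) : ℂ).re := by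
      rw [hinner]
      simp only [Complex.add_re, Complex.conj_re, Complex.re_ofReal_mul, hξa]
      ring
    rw [hnorm, hre] at hy
    nlinarith [hy]
  set t : ℝ := (1 + |C|)⁻¹ with ht
  have htpos : 0 < t := by positivity
  have htC : t * C < 2 := by
    have h1 : t * C ≤ t * |C| := mul_le_mul_of_nonneg_left (le_abs_self C) htpos.le
    have h2 : t * |C| < 1 := by
      rw [ht, inv_mul_lt_iff₀ (by positivity)]
      linarith [abs_nonneg C]
    linarith
  have hk := key (-(t : ℂ) * conj γ)
  have h1 : ((-(t : ℂ) * conj γ) * γ).re = -t * ‖γ‖ ^ 2 := by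
    have h : (-(t : ℂ) * conj γ) * γ = (((-t) * ‖γ‖ ^ 2 : ℝ) : ℂ) := by
      rw [mul_assoc, mul_comm (conj γ) γ, Complex.mul_conj']
      push_cast; ring
    rw [h, Complex.ofReal_re]
  have h2 : ‖(-(t : ℂ) * conj γ)‖ ^ 2 = t ^ 2 * ‖γ‖ ^ 2 := by
    rw [norm_mul, mul_pow]
    simp [abs_of_pos htpos]
  rw [h1, h2] at hk
  by_contra hne
  have hg : 0 < ‖γ‖ ^ 2 := by have := norm_pos_iff.mpr hne; positivity
  nlinarith [hk, mul_pos (mul_pos htpos hg) (show (0:ℝ) < 2 - t * C by linarith)]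

set_option maxHeartbeats 1000000 in
theorem leakage_lemma_ground_state_overlap (n : ℕ)
    (H₁ H₂ : EuclideanSpace ℂ (Fin n) →L[ℂ] EuclideanSpace ℂ (Fin n))
    (hH₁ : IsSelfAdjoint H₁) (hH₂ : IsSelfAdjoint H₂)
    (S : Submodule ℂ (EuclideanSpace ℂ (Fin n)))
    (hS : ∀ x ∈ S, H₂ x = 0)
    (J K : ℝ) (hK : K = ‖H₁‖) (hJ : 2 * K < J)
    (hSperp : ∀ x ∈ Sᗮ, J * ‖x‖ ^ 2 ≤ (inner ℂ x (H₂ x) : ℂ).re)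
    (a b a' : ℝ) (hab : a < b)
    (ξ ξ' : EuclideanSpace ℂ (Fin n))
    (hξS : ξ ∈ S) (hξ : ‖ξ‖ = 1)
    (ha_min : ∀ x ∈ S, ‖x‖ = 1 → a ≤ (inner ℂ x ((H₁ + H₂) x) : ℂ).re)
    (hξa : (inner ℂ ξ ((H₁ + H₂) ξ) : ℂ).re = a)
    (hb_min : ∀ x ∈ S, (inner ℂ ξ x : ℂ) = 0 →
      b * ‖x‖ ^ 2 ≤ (inner ℂ x ((H₁ + H₂) x) : ℂ).re)
    (hb_mem : ∃ x ∈ S, (inner ℂ ξ x : ℂ) = 0 ∧ ‖x‖ = 1 ∧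
      (inner ℂ x ((H₁ + H₂) x) : ℂ).re = b)
    (hξ' : ‖ξ'‖ = 1)
    (hξ'eig : (H₁ + H₂) ξ' = (a' : ℂ) • ξ')
    (ha'_min : ∀ x : EuclideanSpace ℂ (Fin n), ‖x‖ = 1 →
      a' ≤ (inner ℂ x ((H₁ + H₂) x) : ℂ).re) :
    1 - K ^ 2 / ((b - a) * (J - 2 * K)) ≤ ‖(inner ℂ ξ ξ' : ℂ)‖ ^ 2 := by
  have hK0 : 0 ≤ K := hK ▸ norm_nonneg H₁
  set H : EuclideanSpace ℂ (Fin n) →L[ℂ] EuclideanSpace ℂ (Fin n) := H₁ + H₂ with hHdef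
  have hH : IsSelfAdjoint H := ContinuousLinearMap.isSelfAdjoint_iff_isSymmetric.mpr (by have := hH₁.isSymmetric.add hH₂.isSymmetric; exact this)
  have hB : 0 < b - a := sub_pos.mpr hab
  have hD : 0 < J - 2 * K := by linarith
  have hHapp : ∀ u : EuclideanSpace ℂ (Fin n), H u = H₁ u + H₂ u := fun u => rfl
  -- norm bounds for H₁
  have habs : ∀ u v : EuclideanSpace ℂ (Fin n), ‖(inner ℂ u (H₁ v) : ℂ)‖ ≤ K * (‖u‖ * ‖v‖) := by
    intro u v
    calc ‖(inner ℂ u (H₁ v) : ℂ)‖ ≤ ‖u‖ * ‖H₁ v‖ := norm_inner_le_norm u _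
      _ ≤ ‖u‖ * (‖H₁‖ * ‖v‖) := by
          exact mul_le_mul_of_nonneg_left (H₁.le_opNorm v) (norm_nonneg u)
      _ = K * (‖u‖ * ‖v‖) := by rw [hK]; ring
  have hre_abs : ∀ u v : EuclideanSpace ℂ (Fin n),
      |((inner ℂ u (H₁ v) : ℂ)).re| ≤ K * (‖u‖ * ‖v‖) := by
    intro u v
    exact le_trans (Complex.abs_re_le_norm _) (habs u v)
  -- scaling of ha_min
  have hmin' : ∀ y ∈ S, a * ‖y‖ ^ 2 ≤ (inner ℂ y (H y) : ℂ).re := by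
    intro y hy
    rcases eq_or_ne y 0 with rfl | hy0
    · simp
    · have hny : (0:ℝ) < ‖y‖ := norm_pos_iff.mpr hy0
      have hu : ‖((‖y‖⁻¹ : ℝ) : ℂ) • y‖ = 1 := by
        rw [norm_smul, Complex.norm_real, Real.norm_eq_abs, abs_of_pos (inv_pos.mpr hny)]
        field_simp
      have h := ha_min _ (S.smul_mem _ hy) hu
      have hcomp : (inner ℂ (((‖y‖⁻¹ : ℝ) : ℂ) • y) (H (((‖y‖⁻¹ : ℝ) : ℂ) • y)) : ℂ).re
          = ‖y‖⁻¹ * (‖y‖⁻¹ * (inner ℂ y (H y) : ℂ).re) := by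
        rw [map_smul, inner_smul_left, inner_smul_right, Complex.conj_ofReal,
          ← mul_assoc, ← Complex.ofReal_mul, Complex.re_ofReal_mul]
        ring
      rw [hcomp] at h
      have h2 := mul_le_mul_of_nonneg_right h (le_of_lt (mul_pos hny hny))
      calc a * ‖y‖ ^ 2 = a * (‖y‖ * ‖y‖) := by ring
        _ ≤ ‖y‖⁻¹ * (‖y‖⁻¹ * (inner ℂ y (H y) : ℂ).re) * (‖y‖ * ‖y‖) := h2
        _ = (inner ℂ y (H y) : ℂ).re := by field_simp
  have hortho : ∀ x ∈ S, (inner ℂ ξ x : ℂ) = 0 → (inner ℂ ξ (H x) : ℂ) = 0 :=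
    fun x hx hxo => aux_ortho H hH S a ξ hξS hξ hmin' hξa x hx hxo
  -- projection decomposition
  obtain ⟨p, hpS, q, hqperp, hpq_sum⟩ :
      ∃ p, p ∈ S ∧ ∃ q, q ∈ Sᗮ ∧ p + q = ξ' :=
    ⟨(S.orthogonalProjection ξ' : EuclideanSpace ℂ (Fin n)), SetLike.coe_mem _,
      ξ' - (S.orthogonalProjection ξ' : EuclideanSpace ℂ (Fin n)),
      S.sub_starProjection_mem_orthogonal ξ', by abel⟩
  have horth : ∀ u ∈ S, (inner ℂ u q : ℂ) = 0 :=
    fun u hu => (Submodule.mem_orthogonal S q).mp hqperp u hu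
  set c : ℂ := (inner ℂ ξ ξ' : ℂ) with hcdef
  have hξq : (inner ℂ ξ q : ℂ) = 0 := horth ξ hξS
  have hξp : (inner ℂ ξ p : ℂ) = c := by
    have h : (inner ℂ ξ (p + q) : ℂ) = c := by rw [hpq_sum]
    rwa [inner_add_right, hξq, add_zero] at h
  set w : EuclideanSpace ℂ (Fin n) := p - c • ξ with hwdef
  have hwS : w ∈ S := S.sub_mem hpS (S.smul_mem c hξS)
  have hξξ : (inner ℂ ξ ξ : ℂ) = 1 := by
    rw [inner_self_eq_norm_sq_to_K, hξ]; norm_num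
  have hξw : (inner ℂ ξ w : ℂ) = 0 := by
    rw [hwdef, inner_sub_right, inner_smul_right, hξp, hξξ, mul_one, sub_self]
  have hwξ : (inner ℂ w ξ : ℂ) = 0 := by
    rw [← inner_conj_symm, hξw, map_zero]
  have hp_dec : p = c • ξ + w := by rw [hwdef]; abel
  have hwq : (inner ℂ w q : ℂ) = 0 := horth w hwS
  have hpq0 : (inner ℂ p q : ℂ) = 0 := horth p hpS
  have hqp0 : (inner ℂ q p : ℂ) = 0 := by rw [← inner_conj_symm, hpq0, map_zero]
  -- norm decomposition
  have hnorm1 : ‖p‖ ^ 2 + ‖q‖ ^ 2 = 1 := by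
    have h := norm_add_sq (𝕜 := ℂ) p q
    rw [hpq_sum, hξ', hpq0] at h
    simp at h
    linarith
  have hnormp : ‖p‖ ^ 2 = ‖c‖ ^ 2 + ‖w‖ ^ 2 := by
    have h := norm_add_sq (𝕜 := ℂ) (c • ξ) w
    rw [← hp_dec, inner_smul_left, hξw, mul_zero, norm_smul, hξ, mul_one] at h
    simp only [map_zero, mul_zero, add_zero] at h
    linarith
  have htotal : ‖c‖ ^ 2 + ‖w‖ ^ 2 + ‖q‖ ^ 2 = 1 := by linarith
  -- eigen-equation inner products
  have heig : ∀ u : EuclideanSpace ℂ (Fin n),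
      (inner ℂ u (H p) : ℂ) + (inner ℂ u (H q) : ℂ) = (a' : ℂ) * (inner ℂ u ξ' : ℂ) := by
    intro u
    rw [← inner_add_right, ← map_add, hpq_sum, hξ'eig, inner_smul_right]
  -- relation (1)
  have hwHξ : (inner ℂ w (H ξ) : ℂ) = 0 := by
    have h0 : (inner ℂ ξ (H w) : ℂ) = 0 := hortho w hwS hξw
    have h1 : (inner ℂ (H ξ) w : ℂ) = inner ℂ ξ (H w) := hH.isSymmetric ξ w
    rw [← inner_conj_symm, h1, h0, map_zero]
  have hwH₂q : (inner ℂ w (H₂ q) : ℂ) = 0 := by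
    have h1 : (inner ℂ (H₂ w) q : ℂ) = inner ℂ w (H₂ q) := hH₂.isSymmetric w q
    rw [← h1, hS w hwS, inner_zero_left]
  have hwHp : (inner ℂ w (H p) : ℂ) = inner ℂ w (H w) := by
    rw [hp_dec, map_add, inner_add_right, map_smul, inner_smul_right, hwHξ, mul_zero, zero_add]
  have hwHq : (inner ℂ w (H q) : ℂ) = inner ℂ w (H₁ q) := by
    rw [hHapp q, inner_add_right, hwH₂q, add_zero]
  have hwξ' : (inner ℂ w ξ' : ℂ) = ((‖w‖ : ℂ)) ^ 2 := by
    rw [← hpq_sum, inner_add_right, hwq, add_zero, hp_dec, inner_add_right,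
      inner_smul_right, hwξ, mul_zero, zero_add, inner_self_eq_norm_sq_to_K]
    norm_cast
  have e1 : (inner ℂ w (H w) : ℂ).re + (inner ℂ w (H₁ q) : ℂ).re = a' * ‖w‖ ^ 2 := by
    have h := heig w
    rw [hwHp, hwHq, hwξ'] at h
    have h2 : (inner ℂ w (H w) : ℂ).re + (inner ℂ w (H₁ q) : ℂ).re
        = ((a' : ℂ) * ((‖w‖ : ℂ)) ^ 2).re := by rw [← Complex.add_re, h]
    rw [h2, ← Complex.ofReal_pow, ← Complex.ofReal_mul, Complex.ofReal_re]
  have ha'a : a' ≤ a := by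
    have h := ha'_min ξ hξ
    rw [hξa] at h
    exact h
  have rel1 : (b - a) * ‖w‖ ^ 2 ≤ K * (‖w‖ * ‖q‖) := by
    have hb_w := hb_min w hwS hξw
    have hlow := (abs_le.mp (hre_abs w q)).1
    linarith [hb_w, e1, hlow, mul_nonneg (sub_nonneg.mpr ha'a) (sq_nonneg ‖w‖)]
  -- relation (2)
  have hqH₂p : (inner ℂ q (H₂ p) : ℂ) = 0 := by rw [hS p hpS, inner_zero_right]
  have hqHp : (inner ℂ q (H p) : ℂ) = inner ℂ q (H₁ p) := by
    rw [hHapp p, inner_add_right, hqH₂p, add_zero]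
  have hqξ' : (inner ℂ q ξ' : ℂ) = ((‖q‖ : ℂ)) ^ 2 := by
    rw [← hpq_sum, inner_add_right, hqp0, zero_add, inner_self_eq_norm_sq_to_K]
    norm_cast
  have e2 : (inner ℂ q (H₁ p) : ℂ).re + ((inner ℂ q (H₁ q) : ℂ).re + (inner ℂ q (H₂ q) : ℂ).re)
      = a' * ‖q‖ ^ 2 := by
    have h := heig q
    rw [hqHp, hqξ', hHapp q, inner_add_right] at h
    have h2 : (inner ℂ q (H₁ p) : ℂ).re + ((inner ℂ q (H₁ q) : ℂ).re + (inner ℂ q (H₂ q) : ℂ).re)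
        = ((a' : ℂ) * ((‖q‖ : ℂ)) ^ 2).re := by rw [← Complex.add_re, ← Complex.add_re, h]
    rw [h2, ← Complex.ofReal_pow, ← Complex.ofReal_mul, Complex.ofReal_re]
  have hbK : b ≤ K := by
    obtain ⟨x, hxS, hxo, hx1, hxb⟩ := hb_mem
    have hx2 : (inner ℂ x (H x) : ℂ) = inner ℂ x (H₁ x) := by
      rw [hHapp x, inner_add_right, hS x hxS, inner_zero_right, add_zero]
    have h3 := (abs_le.mp (hre_abs x x)).2
    rw [hx1] at h3
    calc b = (inner ℂ x (H x) : ℂ).re := hxb.symm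
      _ = (inner ℂ x (H₁ x) : ℂ).re := by rw [hx2]
      _ ≤ K * (1 * 1) := h3
      _ = K := by ring
  have hp_le1 : ‖p‖ ≤ 1 := by
    linarith [hnorm1, sq_nonneg ‖q‖, sq_nonneg (‖p‖ - 1)]
  have rel2 : ((J - 2 * K) + (b - a)) * ‖q‖ ^ 2 ≤ K * ‖q‖ := by
    have hJq := hSperp q hqperp
    have hlow1 := (abs_le.mp (hre_abs q q)).1
    have hlow2 := (abs_le.mp (hre_abs q p)).1
    have hqp_le : K * (‖q‖ * ‖p‖) ≤ K * ‖q‖ := by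
      have := mul_le_mul_of_nonneg_left hp_le1 (mul_nonneg hK0 (norm_nonneg q))
      calc K * (‖q‖ * ‖p‖) = K * ‖q‖ * ‖p‖ := by ring
        _ ≤ K * ‖q‖ * 1 := this
        _ = K * ‖q‖ := by ring
    linarith [e2, hJq, hlow1, hlow2, hqp_le,
      mul_nonneg (sub_nonneg.mpr ha'a) (sq_nonneg ‖q‖),
      mul_nonneg (sub_nonneg.mpr hbK) (sq_nonneg ‖q‖)]
  -- linearized versions
  have hBs : (b - a) * ‖w‖ ≤ K * ‖q‖ := by
    rcases eq_or_lt_of_le (norm_nonneg w) with h0 | h0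
    · rw [← h0, mul_zero]
      positivity
    · have : (b - a) * ‖w‖ * ‖w‖ ≤ K * ‖q‖ * ‖w‖ := by linarith [rel1]
      exact le_of_mul_le_mul_right this h0
  have hDt : ((J - 2 * K) + (b - a)) * ‖q‖ ≤ K := by
    rcases eq_or_lt_of_le (norm_nonneg q) with h0 | h0
    · rw [← h0, mul_zero]; exact hK0
    · have : ((J - 2 * K) + (b - a)) * ‖q‖ * ‖q‖ ≤ K * ‖q‖ := by linarith [rel2]
      exact le_of_mul_le_mul_right this h0
  -- final algebra
  by_cases hcase : K ^ 2 < (b - a) * (J - 2 * K)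
  · have hBpos : (0:ℝ) < b - a := hB
    have hDpos : (0:ℝ) < J - 2 * K := hD
    have f1 : ((b - a) * ‖w‖) * ((b - a) * ‖w‖) ≤ (K * ‖q‖) * (K * ‖q‖) :=
      mul_self_le_mul_self (by positivity) hBs
    have f2 : (((J - 2 * K) + (b - a)) * ‖q‖) * (((J - 2 * K) + (b - a)) * ‖q‖) ≤ K * K :=
      mul_self_le_mul_self (by positivity) hDt
    have f3 : K ^ 2 ≤ (b - a) * (J - 2 * K) := hcase.le
    have P1 : 0 ≤ (K ^ 2 * ‖q‖ ^ 2 - (b - a) ^ 2 * ‖w‖ ^ 2)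
        * ((J - 2 * K) * ((J - 2 * K) + (b - a)) ^ 2) := by
      apply mul_nonneg (by linarith [f1]) (by positivity)
    have P2 : 0 ≤ (K ^ 2 - ((J - 2 * K) + (b - a)) ^ 2 * ‖q‖ ^ 2)
        * ((J - 2 * K) * (K ^ 2 + (b - a) ^ 2)) := by
      apply mul_nonneg (by linarith [f2]) (by positivity)
    have P3 : 0 ≤ ((b - a) * (J - 2 * K) - K ^ 2) * ((J - 2 * K) * K ^ 2) := by
      apply mul_nonneg (by linarith) (by positivity)
    have P4 : (0:ℝ) ≤ K ^ 2 * (b - a) ^ 2 * ((J - 2 * K) + (b - a)) := by positivity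
    have hfin : (‖w‖ ^ 2 + ‖q‖ ^ 2) * ((b - a) * (J - 2 * K))
        * ((b - a) * ((J - 2 * K) + (b - a)) ^ 2)
        ≤ K ^ 2 * ((b - a) * ((J - 2 * K) + (b - a)) ^ 2) := by
      linarith [P1, P2, P3, P4]
    have hsum : (‖w‖ ^ 2 + ‖q‖ ^ 2) * ((b - a) * (J - 2 * K)) ≤ K ^ 2 :=
      le_of_mul_le_mul_right hfin (by positivity)
    have hsum' : ‖w‖ ^ 2 + ‖q‖ ^ 2 ≤ K ^ 2 / ((b - a) * (J - 2 * K)) := by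
      rw [le_div_iff₀ (by positivity)]
      exact hsum
    calc 1 - K ^ 2 / ((b - a) * (J - 2 * K)) ≤ 1 - (‖w‖ ^ 2 + ‖q‖ ^ 2) := by linarith
      _ = ‖c‖ ^ 2 := by rw [← htotal]; ring
  · push_neg at hcase
    have h1 : (1:ℝ) ≤ K ^ 2 / ((b - a) * (J - 2 * K)) := by
      rw [le_div_iff₀ (by positivity)]
      linarith
    have h2 : (0:ℝ) ≤ ‖c‖ ^ 2 := sq_nonneg _
    linarith
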